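/- arXiv:1912.07048 — 6 statements merged into one kernel-verified Lean document; each statement's English description precedes it below -/
import Mathlib

section
/- Let (X, μ) be a σ-finite measure space, N a positive integer, w ∈ Δ_N a probability vector, and f : X × {1,...,N} → ℝ_{>0} measurable in x for each n. Let u : X → ℝ_{≥0} be measurable with ∫_X u dμ = 1. Then ∑_{n=1}^N w_n · exp(∫_X log f(x,n) · u(x) dμ(x)) ≤ exp(∫_X log(∑_{n=1}^N w_n · f(x,n)) · u(x) dμ(x)). -/
open MeasureTheory Real Finset
open scoped NNReal ENNReal

/-- Generalized (continuous-form) Hölder inequality: the weighted geometric-mean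
integral of a sum dominates the sum of weighted geometric means. -/
theorem generalized_holder_inequality
    {X : Type*} [MeasurableSpace X] (μ : Measure X) [SigmaFinite μ]
    (N : ℕ) (hN : 0 < N)
    (w : Fin N → ℝ) (hw_nonneg : ∀ n, 0 ≤ w n) (hw_sum : ∑ n, w n = 1)
    (f : X → Fin N → ℝ) (hf_pos : ∀ x n, 0 < f x n)
    (hf_meas : ∀ n, Measurable fun x => f x n)
    (u : X → ℝ) (hu_nonneg : ∀ x, 0 ≤ u x) (hu_meas : Measurable u)
    (hu_int : ∫ x, u x ∂μ = 1)
    (hint : ∀ n, Integrable (fun x => Real.log (f x n) * u x) μ)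
    (hint_sum : Integrable (fun x => Real.log (∑ n, w n * f x n) * u x) μ) :
    ∑ n, w n * Real.exp (∫ x, Real.log (f x n) * u x ∂μ) ≤
      Real.exp (∫ x, Real.log (∑ n, w n * f x n) * u x ∂μ) := by
  set S : X → ℝ := fun x => ∑ n, w n * f x n with hSdef
  -- positivity of S
  obtain ⟨n0, hn0⟩ : ∃ n, 0 < w n := by
    by_contra h
    push_neg at h
    have : ∑ n, w n = 0 :=
      Finset.sum_eq_zero fun n _ => le_antisymm (h n) (hw_nonneg n)
    rw [this] at hw_sum; norm_num at hw_sum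
  have hS_pos : ∀ x, 0 < S x := fun x =>
    Finset.sum_pos' (fun n _ => mul_nonneg (hw_nonneg n) (hf_pos x n).le)
      ⟨n0, Finset.mem_univ n0, mul_pos hn0 (hf_pos x n0)⟩
  have hS_meas : Measurable S := by
    apply Finset.measurable_sum
    intro n _
    exact (hf_meas n).const_mul (w n)
  -- u is integrable
  have hu_integ : Integrable u μ := by
    by_contra h
    rw [integral_undef h] at hu_int; norm_num at hu_int
  -- the probability measure with density u
  set uN : X → ℝ≥0 := fun x => ⟨u x, hu_nonneg x⟩ with huNdef
  have huN_meas : Measurable uN := by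
    apply Measurable.subtype_mk hu_meas
  set ν : Measure X := μ.withDensity (fun x => (uN x : ℝ≥0∞)) with hνdef
  have hν_prob : IsProbabilityMeasure ν := by
    constructor
    rw [hνdef, withDensity_apply _ MeasurableSet.univ, setLIntegral_univ]
    have : ∀ x, ((uN x : ℝ≥0) : ℝ≥0∞) = ENNReal.ofReal (u x) := fun x => by
      simp [huNdef, ENNReal.ofReal, Real.toNNReal, hu_nonneg x]; rfl
    simp_rw [this]
    rw [← ofReal_integral_eq_lintegral_ofReal hu_integ
      (Filter.Eventually.of_forall hu_nonneg), hu_int]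
    simp
  -- integrability of the ratio functions
  have hratio_meas : ∀ n, Measurable fun x => f x n / S x * u x := fun n =>
    ((hf_meas n).div hS_meas).mul hu_meas
  have hratio_le : ∀ n, 0 < w n → ∀ x, f x n / S x ≤ (w n)⁻¹ := by
    intro n hn x
    rw [div_le_iff₀ (hS_pos x)]
    rw [inv_mul_eq_div, le_div_iff₀ hn, mul_comm]
    exact Finset.single_le_sum
      (fun m (_ : m ∈ Finset.univ) => mul_nonneg (hw_nonneg m) (hf_pos x m).le)
      (Finset.mem_univ n)
  have hratio_int : ∀ n, 0 < w n → Integrable (fun x => f x n / S x * u x) μ := by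
    intro n hn
    apply Integrable.mono (hu_integ.const_mul (w n)⁻¹)
      (hratio_meas n).aestronglyMeasurable
    apply Filter.Eventually.of_forall
    intro x
    have h1 : 0 ≤ f x n / S x * u x :=
      mul_nonneg (div_nonneg (hf_pos x n).le (hS_pos x).le) (hu_nonneg x)
    have h2 : 0 ≤ (w n)⁻¹ * u x := mul_nonneg (inv_nonneg.mpr hn.le) (hu_nonneg x)
    rw [Real.norm_eq_abs, Real.norm_eq_abs, abs_of_nonneg h1, abs_of_nonneg h2]
    exact mul_le_mul_of_nonneg_right (hratio_le n hn x) (hu_nonneg x)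
  -- Jensen's inequality for each n with w n > 0
  have key : ∀ n, 0 < w n →
      Real.exp (∫ x, (Real.log (f x n) - Real.log (S x)) * u x ∂μ) ≤
        ∫ x, f x n / S x * u x ∂μ := by
    intro n hn
    set φ : X → ℝ := fun x => Real.log (f x n) - Real.log (S x) with hφdef
    have hsmul : ∀ g : X → ℝ, (fun x => uN x • g x) = fun x => g x * u x := by
      intro g; funext x; simp [huNdef, NNReal.smul_def]; change u x * g x = g x * u x; ring
    have hexp_eq : (fun x => Real.exp (φ x)) = fun x => f x n / S x := by
      funext x
      rw [hφdef, Real.exp_sub, Real.exp_log (hf_pos x n), Real.exp_log (hS_pos x)]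
    have hφ_int : Integrable φ ν := by
      rw [hνdef, integrable_withDensity_iff_integrable_smul huN_meas, hsmul]
      have : (fun x => φ x * u x)
          = fun x => Real.log (f x n) * u x - Real.log (S x) * u x := by
        funext x; rw [hφdef]; ring
      rw [this]
      exact (hint n).sub hint_sum
    have hexpφ_int : Integrable (Real.exp ∘ φ) ν := by
      rw [hνdef, integrable_withDensity_iff_integrable_smul huN_meas, hsmul]
      have : (fun x => (Real.exp ∘ φ) x * u x) = fun x => f x n / S x * u x := by
        funext x
        simp only [Function.comp_apply]
        rw [congrFun hexp_eq x]
      rw [this]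
      exact hratio_int n hn
    have hjensen := convexOn_exp.map_integral_le (μ := ν)
      continuous_exp.continuousOn isClosed_univ
      (Filter.Eventually.of_forall fun x => Set.mem_univ (φ x)) hφ_int hexpφ_int
    have h1 : ∫ x, φ x ∂ν = ∫ x, φ x * u x ∂μ := by
      rw [hνdef, integral_withDensity_eq_integral_smul huN_meas, hsmul]
    have h2 : ∫ x, Real.exp (φ x) ∂ν = ∫ x, f x n / S x * u x ∂μ := by
      rw [hνdef, integral_withDensity_eq_integral_smul huN_meas, hsmul]
      simp_rw [congrFun hexp_eq]
    rw [h1, h2] at hjensen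
    exact hjensen
  -- integral difference identity
  have hdiff : ∀ n, ∫ x, (Real.log (f x n) - Real.log (S x)) * u x ∂μ
      = (∫ x, Real.log (f x n) * u x ∂μ) - ∫ x, Real.log (S x) * u x ∂μ := by
    intro n
    rw [← integral_sub (hint n) hint_sum]
    congr 1; funext x; ring
  -- the summands with weights
  have hg_int : ∀ n, Integrable (fun x => w n * (f x n / S x * u x)) μ := by
    intro n
    rcases eq_or_lt_of_le (hw_nonneg n) with h | h
    · simp [← h]
    · exact (hratio_int n h).const_mul (w n)
  have hsum_one : ∑ n, ∫ x, w n * (f x n / S x * u x) ∂μ = 1 := by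
    rw [← integral_finset_sum _ fun n _ => hg_int n]
    rw [← hu_int]
    apply integral_congr_ae
    apply Filter.Eventually.of_forall
    intro x
    have : ∑ n, w n * (f x n / S x * u x) = (∑ n, w n * f x n) / S x * u x := by
      rw [Finset.sum_div, Finset.sum_mul]
      apply Finset.sum_congr rfl
      intro n _; ring
    show ∑ n, w n * (f x n / S x * u x) = u x
    rw [this]
    show S x / S x * u x = u x
    rw [div_self (ne_of_gt (hS_pos x)), one_mul]
  have hsum_le : ∑ n, w n * Real.exp
      (∫ x, (Real.log (f x n) - Real.log (S x)) * u x ∂μ) ≤ 1 := by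
    rw [← hsum_one]
    apply Finset.sum_le_sum
    intro n _
    rcases eq_or_lt_of_le (hw_nonneg n) with h | h
    · simp [← h]
    · rw [integral_const_mul]
      exact mul_le_mul_of_nonneg_left (key n h) h.le
  calc ∑ n, w n * Real.exp (∫ x, Real.log (f x n) * u x ∂μ)
      = (∑ n, w n * Real.exp
          (∫ x, (Real.log (f x n) - Real.log (S x)) * u x ∂μ))
        * Real.exp (∫ x, Real.log (S x) * u x ∂μ) := by
        rw [Finset.sum_mul]
        apply Finset.sum_congr rfl
        intro n _
        rw [hdiff n, mul_assoc, ← Real.exp_add]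
        ring_nf
    _ ≤ 1 * Real.exp (∫ x, Real.log (S x) * u x ∂μ) :=
        mul_le_mul_of_nonneg_right hsum_le (Real.exp_pos _).le
    _ = Real.exp (∫ x, Real.log (S x) * u x ∂μ) := one_mul _
end

section
/- Let λ : Γ × Ω → ℝ_{≥0} be a loss function and η > 0. Suppose λ is η-mixable with substitution function Σ_λ, i.e., for every N, every probability vector w ∈ Δ_N and forecasts γ¹,...,γᴺ ∈ Γ, the element γ̄ = Σ_λ(γ¹,...,γᴺ; w) satisfies exp(−η λ(γ̄, ω)) ≥ ∑_n w_n exp(−η λ(γⁿ, ω)) for all ω ∈ Ω. Let (X, σ_X) be a measurable space, μ_ω an ω-dependent measure on X and u_ω a nonnegative measurable weight with ∫_X u_ω dμ_ω = 1 for each ω. Define the integral loss λ_{u,μ}(γ, ω) = ∫_X λ(γ(x), ω(x)) u_ω(x) dμ_ω(x) on measurable functions γ : X → Γ, ω : X → Ω. Then λ_{u,μ} is η-mixable, with aggregated forecast given by the pointwise substitution γ̄(x) = Σ_λ(γ¹(x),...,γᴺ(x); w). -/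
open MeasureTheory Real Finset

/-- Integral mixability: if `lam` is `η`-mixable with substitution function `Sub`,
then the integral loss `λ_{u,μ}` is `η`-mixable, with pointwise substitution
as aggregation rule. -/
theorem integral_mixability
    {Γ Ω X : Type*} [MeasurableSpace Γ] [MeasurableSpace Ω] [MeasurableSpace X]
    (lam : Γ → Ω → ℝ) (hlam_nonneg : ∀ g o, 0 ≤ lam g o)
    (hlam_meas : Measurable fun p : Γ × Ω => lam p.1 p.2)
    (η : ℝ) (hη : 0 < η)
    (Sub : (N : ℕ) → (Fin N → Γ) → (Fin N → ℝ) → Γ)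
    (hSub_meas : ∀ (N : ℕ) (w : Fin N → ℝ),
      Measurable fun g : Fin N → Γ => Sub N g w)
    (hmix : ∀ (N : ℕ) (w : Fin N → ℝ), (∀ n, 0 ≤ w n) → (∑ n, w n = 1) →
      ∀ (γ : Fin N → Γ) (o : Ω),
        ∑ n, w n * Real.exp (-η * lam (γ n) o) ≤ Real.exp (-η * lam (Sub N γ w) o))
    -- ω-dependent measure and weight
    (μ : (X → Ω) → Measure X) (u : (X → Ω) → X → ℝ)
    (hu_nonneg : ∀ ω x, 0 ≤ u ω x)
    (hu_meas : ∀ ω, Measurable (u ω))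
    (hu_int : ∀ ω, ∫ x, u ω x ∂(μ ω) = 1)
    -- the game data
    (N : ℕ) (w : Fin N → ℝ) (hw_nonneg : ∀ n, 0 ≤ w n) (hw_sum : ∑ n, w n = 1)
    (γ : Fin N → X → Γ) (hγ_meas : ∀ n, Measurable (γ n))
    (ω : X → Ω) (hω_meas : Measurable ω)
    (hint : ∀ n, Integrable (fun x => lam (γ n x) (ω x) * u ω x) (μ ω))
    (hint_agg : Integrable
      (fun x => lam (Sub N (fun n => γ n x) w) (ω x) * u ω x) (μ ω)) :
    ∑ n, w n * Real.exp (-η * ∫ x, lam (γ n x) (ω x) * u ω x ∂(μ ω)) ≤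
      Real.exp (-η * ∫ x, lam (Sub N (fun n => γ n x) w) (ω x) * u ω x ∂(μ ω)) := by
  classical
  set ν := μ ω with hν
  set f : Fin N → X → ℝ := fun n x => lam (γ n x) (ω x) with hf
  set L : X → ℝ := fun x => lam (Sub N (fun n => γ n x) w) (ω x) with hLdef
  set I : Fin N → ℝ := fun n => ∫ x, f n x * u ω x ∂ν with hIdef
  set J : ℝ := ∫ x, L x * u ω x ∂ν with hJdef
  -- u is integrable
  have hu1 : ∫ x, u ω x ∂ν = 1 := hu_int ω
  have hu_intg : Integrable (u ω) ν := by
    by_contra h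
    rw [integral_undef h] at hu1
    norm_num at hu1
  set G : Fin N → ℝ := fun n => Real.exp (-η * I n) with hGdef
  set D : ℝ := ∑ n, w n * G n with hDdef
  obtain ⟨n0, hn0⟩ : ∃ n, 0 < w n := by
    by_contra h
    push_neg at h
    have : ∑ n, w n = 0 :=
      Finset.sum_eq_zero fun n _ => le_antisymm (h n) (hw_nonneg n)
    rw [hw_sum] at this; norm_num at this
  have hD_pos : 0 < D := by
    have h1 : w n0 * G n0 ≤ D :=
      Finset.single_le_sum (f := fun n => w n * G n)
        (fun n _ => mul_nonneg (hw_nonneg n) (Real.exp_pos _).le) (Finset.mem_univ n0)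
    exact lt_of_lt_of_le (mul_pos hn0 (Real.exp_pos _)) h1
  set t : Fin N → ℝ := fun n => w n * G n / D with htdef
  have ht_nonneg : ∀ n, 0 ≤ t n := fun n =>
    div_nonneg (mul_nonneg (hw_nonneg n) (Real.exp_pos _).le) hD_pos.le
  have ht_sum : ∑ n, t n = 1 := by
    rw [htdef]
    rw [← Finset.sum_div]
    exact div_self hD_pos.ne'
  have ht_zero : ∀ n, t n = 0 → w n = 0 := by
    intro n hn
    rw [htdef] at hn
    have := (div_eq_zero_iff.mp hn).resolve_right hD_pos.ne'
    exact (mul_eq_zero.mp this).resolve_right (Real.exp_pos _).ne'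
  have hw_pos : ∀ n, t n ≠ 0 → 0 < w n := by
    intro n h
    rcases (hw_nonneg n).lt_or_eq with h1 | h1
    · exact h1
    · exact absurd (show t n = 0 by simp [htdef, ← h1]) h
  -- pointwise key inequality
  have key : ∀ x, (∑ n, t n * (Real.log (w n / t n) - η * f n x)) ≤ -η * L x := by
    intro x
    set z : Fin N → ℝ := fun n => w n * Real.exp (-η * f n x) / t n with hzdef
    have hz_nonneg : ∀ n, 0 ≤ z n := fun n =>
      div_nonneg (mul_nonneg (hw_nonneg n) (Real.exp_pos _).le) (ht_nonneg n)
    have hz_pos : ∀ n, t n ≠ 0 → 0 < z n := fun n h =>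
      div_pos (mul_pos (hw_pos n h) (Real.exp_pos _))
        (lt_of_le_of_ne (ht_nonneg n) (Ne.symm h))
    have htz : ∀ n, t n * z n = w n * Real.exp (-η * f n x) := by
      intro n
      rcases eq_or_ne (t n) 0 with h | h
      · rw [h, ht_zero n h]; ring
      · rw [hzdef]; field_simp
    have hS_pos : 0 < ∑ n, w n * Real.exp (-η * f n x) := by
      have h1 : w n0 * Real.exp (-η * f n0 x) ≤ ∑ n, w n * Real.exp (-η * f n x) :=
        Finset.single_le_sum (f := fun n => w n * Real.exp (-η * f n x))
          (fun n _ => mul_nonneg (hw_nonneg n) (Real.exp_pos _).le) (Finset.mem_univ n0)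
      exact lt_of_lt_of_le (mul_pos hn0 (Real.exp_pos _)) h1
    have hgm : ∏ n, z n ^ t n ≤ ∑ n, t n * z n :=
      Real.geom_mean_le_arith_mean_weighted Finset.univ t z
        (fun n _ => ht_nonneg n) ht_sum (fun n _ => hz_nonneg n)
    have hfac_pos : ∀ n : Fin N, 0 < z n ^ t n := by
      intro n
      rcases eq_or_ne (t n) 0 with h | h
      · rw [h, Real.rpow_zero]; norm_num
      · exact Real.rpow_pos_of_pos (hz_pos n h) _
    have hprod_pos : 0 < ∏ n, z n ^ t n :=
      Finset.prod_pos fun n _ => hfac_pos n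
    have hlog1 : (∑ n, t n * (Real.log (w n / t n) - η * f n x)) =
        Real.log (∏ n, z n ^ t n) := by
      rw [Real.log_prod (fun n _ => (hfac_pos n).ne')]
      apply Finset.sum_congr rfl
      intro n _
      rcases eq_or_ne (t n) 0 with h | h
      · rw [h, Real.rpow_zero, Real.log_one]; ring
      · have htpos : 0 < t n := lt_of_le_of_ne (ht_nonneg n) (Ne.symm h)
        have hwpos : 0 < w n := hw_pos n h
        have hz_eq : z n = (w n / t n) * Real.exp (-η * f n x) := by
          rw [hzdef]; ring
        rw [Real.log_rpow (hz_pos n h), hz_eq,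
          Real.log_mul (by positivity) (Real.exp_pos _).ne', Real.log_exp]
        ring
    have hS_le : Real.log (∑ n, w n * Real.exp (-η * f n x)) ≤ -η * L x := by
      rw [Real.log_le_iff_le_exp hS_pos]
      exact hmix N w hw_nonneg hw_sum (fun n => γ n x) (ω x)
    calc (∑ n, t n * (Real.log (w n / t n) - η * f n x))
        = Real.log (∏ n, z n ^ t n) := hlog1
      _ ≤ Real.log (∑ n, t n * z n) := Real.log_le_log hprod_pos hgm
      _ = Real.log (∑ n, w n * Real.exp (-η * f n x)) := by
          rw [Finset.sum_congr rfl (fun n _ => htz n)]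
      _ ≤ -η * L x := hS_le
  -- integrate the pointwise inequality (against u dν)
  have hint_each : ∀ n : Fin N, Integrable
      (fun x => t n * Real.log (w n / t n) * u ω x - η * t n * (f n x * u ω x)) ν :=
    fun n => (hu_intg.const_mul _).sub ((hint n).const_mul _)
  have hLHS_int : Integrable
      (fun x => ∑ n, (t n * Real.log (w n / t n) * u ω x - η * t n * (f n x * u ω x))) ν :=
    integrable_finset_sum _ fun n _ => hint_each n
  have hRHS_int : Integrable (fun x => -η * (L x * u ω x)) ν := (hint_agg).const_mul _
  have hmono : ∫ x, (∑ n, (t n * Real.log (w n / t n) * u ω x -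
      η * t n * (f n x * u ω x))) ∂ν ≤ ∫ x, -η * (L x * u ω x) ∂ν := by
    apply integral_mono hLHS_int hRHS_int
    intro x
    have h1 := mul_le_mul_of_nonneg_right (key x) (hu_nonneg ω x)
    calc (∑ n, (t n * Real.log (w n / t n) * u ω x - η * t n * (f n x * u ω x)))
        = (∑ n, t n * (Real.log (w n / t n) - η * f n x)) * u ω x := by
          rw [Finset.sum_mul]
          apply Finset.sum_congr rfl
          intro n _; ring
      _ ≤ (-η * L x) * u ω x := h1
      _ = -η * (L x * u ω x) := by ring
  -- compute both integrals
  have hLHS_eq : ∫ x, (∑ n, (t n * Real.log (w n / t n) * u ω x -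
      η * t n * (f n x * u ω x))) ∂ν = ∑ n, (t n * Real.log (w n / t n) - η * t n * I n) := by
    rw [integral_finset_sum _ fun n _ => hint_each n]
    apply Finset.sum_congr rfl
    intro n _
    rw [integral_sub (hu_intg.const_mul _) ((hint n).const_mul _),
      integral_const_mul, integral_const_mul, hu1, hIdef, mul_one]
  have hRHS_eq : ∫ x, -η * (L x * u ω x) ∂ν = -η * J := by
    rw [integral_const_mul, hJdef]
  rw [hLHS_eq, hRHS_eq] at hmono
  have hlogD : Real.log D = ∑ n, (t n * Real.log (w n / t n) - η * t n * I n) := by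
    have hterm : ∀ n : Fin N, t n * Real.log (w n / t n) - η * t n * I n
        = t n * Real.log D := by
      intro n
      rcases eq_or_ne (t n) 0 with h | h
      · rw [h]; ring
      · have htpos : 0 < t n := lt_of_le_of_ne (ht_nonneg n) (Ne.symm h)
        have hwpos : 0 < w n := hw_pos n h
        have hD_eq : D = (w n / t n) * G n := by
          rw [htdef]; field_simp; exact (mul_inv_cancel₀ (show G n ≠ 0 from (Real.exp_pos _).ne')).symm
        rw [hD_eq, Real.log_mul (by positivity) (Real.exp_pos _).ne', Real.log_exp]
        ring
    rw [Finset.sum_congr rfl (fun n _ => hterm n), ← Finset.sum_mul, ht_sum, one_mul]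
  have hfinal : Real.log D ≤ -η * J := by rw [hlogD]; exact hmono
  exact (Real.log_le_iff_le_exp hD_pos).mp hfinal
end

section
/- Let λ : Γ × Ω → ℝ be η-exponentially concave, where Γ is a convex subset of a real vector space: for all N, probability vectors w and forecasts γ¹,...,γᴺ ∈ Γ, exp(−η λ(∑_n w_n γⁿ, ω)) ≥ ∑_n w_n exp(−η λ(γⁿ, ω)) for all ω. Let λ_{u,μ}(γ,ω) = ∫_X λ(γ(x), ω(x)) u_ω(x) dμ_ω(x) be the corresponding integral loss, where ∫_X u_ω dμ_ω = 1. Then λ_{u,μ} is η-exponentially concave: for measurable forecasts γⁿ : X → Γ and γ̄(x) = ∑_n w_n γⁿ(x), exp(−η λ_{u,μ}(γ̄, ω)) ≥ ∑_n w_n exp(−η λ_{u,μ}(γⁿ, ω)) for all measurable ω : X → Ω. -/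
open MeasureTheory Real Finset

theorem exp_concavity_integral_aux {X : Type*} [MeasurableSpace X] (ν : Measure X)
    (u : X → ℝ) (hu_nonneg : ∀ x, 0 ≤ u x) (hu_meas : Measurable u)
    (hu_int : ∫ x, u x ∂ν = 1)
    (N : ℕ) (w : Fin N → ℝ) (hw_nonneg : ∀ n, 0 ≤ w n)
    (η : ℝ)
    (f : Fin N → X → ℝ) (hf_meas : ∀ n, Measurable (f n))
    (F : X → ℝ)
    (hkey : ∀ x, ∑ n, w n * Real.exp (-η * f n x) ≤ Real.exp (-η * F x))
    (hfint : ∀ n, Integrable (fun x => f n x * u x) ν)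
    (hFint : Integrable (fun x => F x * u x) ν) :
    ∑ n, w n * Real.exp (-η * ∫ x, f n x * u x ∂ν) ≤
      Real.exp (-η * ∫ x, F x * u x ∂ν) := by
  classical
  have hu_intg : Integrable u ν := by
    by_contra h
    rw [integral_undef h] at hu_int
    norm_num at hu_int
  set I : Fin N → ℝ := fun n => ∫ x, f n x * u x ∂ν with hI
  set J : ℝ := ∫ x, F x * u x ∂ν with hJ
  set g : Fin N → X → ℝ := fun n x => η * F x - η * f n x with hg
  set E : Fin N → X → ℝ := fun n x => Real.exp (g n x) * u x with hE
  have hE_nonneg : ∀ n x, 0 ≤ E n x := fun n x =>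
    mul_nonneg (Real.exp_pos _).le (hu_nonneg x)
  -- a.e. strong measurability of E n
  have hE_meas : ∀ n, AEStronglyMeasurable (E n) ν := by
    intro n
    have h1 : AEMeasurable (fun x => F x * u x) ν := hFint.aemeasurable
    have h2 : AEMeasurable (fun x =>
        Real.exp (η * ((F x * u x) / u x) - η * f n x) * u x) ν :=
      ((Real.measurable_exp.comp_aemeasurable
        ((aemeasurable_const.mul (h1.div hu_meas.aemeasurable)).sub
        (aemeasurable_const.mul (hf_meas n).aemeasurable))).mul hu_meas.aemeasurable)
    have heq : (fun x => Real.exp (η * ((F x * u x) / u x) - η * f n x) * u x) = E n := by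
      funext x
      by_cases hx : u x = 0
      · simp [hE, hx]
      · rw [mul_div_assoc, div_self hx, mul_one]
    rw [← heq]
    exact h2.aestronglyMeasurable
  -- pointwise bound w n * E n x ≤ u x
  have hsingle : ∀ n x, w n * Real.exp (-η * f n x) ≤ Real.exp (-η * F x) := by
    intro n x
    refine le_trans ?_ (hkey x)
    exact Finset.single_le_sum (f := fun m => w m * Real.exp (-η * f m x))
      (fun m _ => mul_nonneg (hw_nonneg m) (Real.exp_pos _).le) (Finset.mem_univ n)
  have hEb : ∀ n x, w n * E n x ≤ u x := by
    intro n x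
    have h1 : Real.exp (g n x) * Real.exp (-η * F x) = Real.exp (-η * f n x) := by
      rw [← Real.exp_add]; congr 1; simp only [hg]; ring
    have h2 : w n * Real.exp (g n x) ≤ 1 := by
      rw [← mul_le_mul_iff_of_pos_right (Real.exp_pos (-η * F x)), one_mul, mul_assoc, h1]
      exact hsingle n x
    calc w n * E n x = (w n * Real.exp (g n x)) * u x := by simp only [hE]; ring
      _ ≤ 1 * u x := mul_le_mul_of_nonneg_right h2 (hu_nonneg x)
      _ = u x := one_mul _
  -- integrability of w n * E n
  have hwE_int : ∀ n, Integrable (fun x => w n * E n x) ν := by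
    intro n
    refine Integrable.mono' hu_intg ((hE_meas n).const_mul _) ?_
    filter_upwards with x
    rw [Real.norm_of_nonneg (mul_nonneg (hw_nonneg n) (hE_nonneg n x))]
    exact hEb n x
  -- integrability and value of g n * u
  have hgu_int : ∀ n, Integrable (fun x => g n x * u x) ν := by
    intro n
    have h := (hFint.const_mul η).sub ((hfint n).const_mul η)
    refine h.congr (Filter.Eventually.of_forall fun x => ?_)
    simp only [Pi.sub_apply, hg]; ring
  have hgu_val : ∀ n, ∫ x, g n x * u x ∂ν = η * J - η * I n := by
    intro n
    have heq : (fun x => g n x * u x)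
        = fun x => η * (F x * u x) - η * (f n x * u x) := by
      funext x; simp only [hg]; ring
    rw [heq, integral_sub ((hFint.const_mul η)) ((hfint n).const_mul η),
      integral_const_mul, integral_const_mul]
  -- main per-n bound
  have hmain : ∀ n, w n * Real.exp (-η * I n) ≤
      Real.exp (-η * J) * ∫ x, w n * E n x ∂ν := by
    intro n
    rcases (hw_nonneg n).eq_or_lt with h0 | hpos
    · simp only [← h0, zero_mul, integral_zero, mul_zero, le_refl]
    · -- Integrable (E n)
      have hEint : Integrable (E n) ν := by
        refine Integrable.mono' (hu_intg.const_mul (w n)⁻¹) (hE_meas n) ?_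
        filter_upwards with x
        rw [Real.norm_of_nonneg (hE_nonneg n x)]
        rw [inv_mul_eq_div, le_div_iff₀ hpos]
        calc E n x * w n = w n * E n x := by ring
          _ ≤ u x := hEb n x
      set c : ℝ := η * J - η * I n with hc
      have jenpt : ∀ x, (Real.exp c * (1 - c)) * u x + Real.exp c * (g n x * u x) ≤ E n x := by
        intro x
        have h1 : Real.exp c * (1 + (g n x - c)) ≤ Real.exp (g n x) := by
          have h2 := Real.add_one_le_exp (g n x - c)
          calc Real.exp c * (1 + (g n x - c)) ≤ Real.exp c * Real.exp (g n x - c) :=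
                mul_le_mul_of_nonneg_left (by linarith) (Real.exp_pos c).le
            _ = Real.exp (g n x) := by rw [← Real.exp_add]; congr 1; ring
        have h3 := mul_le_mul_of_nonneg_right h1 (hu_nonneg x)
        calc (Real.exp c * (1 - c)) * u x + Real.exp c * (g n x * u x)
            = Real.exp c * (1 + (g n x - c)) * u x := by ring
          _ ≤ Real.exp (g n x) * u x := h3
      have hlhs_int : Integrable
          (fun x => (Real.exp c * (1 - c)) * u x + Real.exp c * (g n x * u x)) ν :=
        (hu_intg.const_mul _).add ((hgu_int n).const_mul _)
      have hjen : Real.exp c ≤ ∫ x, E n x ∂ν := by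
        have h2 : ∫ x, ((Real.exp c * (1 - c)) * u x + Real.exp c * (g n x * u x)) ∂ν
            = Real.exp c := by
          rw [integral_add (hu_intg.const_mul _) ((hgu_int n).const_mul _),
            integral_const_mul, integral_const_mul, hu_int, hgu_val n, ← hc]
          ring
        rw [← h2]
        exact integral_mono hlhs_int hEint (fun x => jenpt x)
      have hid : Real.exp (-η * I n) = Real.exp (-η * J) * Real.exp c := by
        rw [← Real.exp_add]; congr 1; rw [hc]; ring
      rw [hid, integral_const_mul]
      have h4 : w n * Real.exp c ≤ w n * ∫ x, E n x ∂ν :=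
        mul_le_mul_of_nonneg_left hjen hpos.le
      calc w n * (Real.exp (-η * J) * Real.exp c)
          = Real.exp (-η * J) * (w n * Real.exp c) := by ring
        _ ≤ Real.exp (-η * J) * (w n * ∫ x, E n x ∂ν) :=
            mul_le_mul_of_nonneg_left h4 (Real.exp_pos _).le
  -- pointwise sum bound
  have hsum_pt : ∀ x, ∑ n, w n * E n x ≤ u x := by
    intro x
    have h1 : ∑ n, w n * E n x
        = (∑ n, w n * Real.exp (-η * f n x)) * (Real.exp (η * F x) * u x) := by
      rw [Finset.sum_mul]
      refine Finset.sum_congr rfl fun n _ => ?_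
      have h5 : Real.exp (g n x) = Real.exp (-η * f n x) * Real.exp (η * F x) := by
        rw [← Real.exp_add]; congr 1; simp only [hg]; ring
      simp only [hE]; rw [h5]; ring
    rw [h1]
    calc (∑ n, w n * Real.exp (-η * f n x)) * (Real.exp (η * F x) * u x)
        ≤ Real.exp (-η * F x) * (Real.exp (η * F x) * u x) :=
          mul_le_mul_of_nonneg_right (hkey x)
            (mul_nonneg (Real.exp_pos _).le (hu_nonneg x))
      _ = u x := by rw [← mul_assoc, ← Real.exp_add]; simp
  show ∑ n, w n * Real.exp (-η * I n) ≤ Real.exp (-η * J)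
  calc ∑ n, w n * Real.exp (-η * I n)
      ≤ ∑ n, Real.exp (-η * J) * ∫ x, w n * E n x ∂ν :=
        Finset.sum_le_sum fun n _ => hmain n
    _ = Real.exp (-η * J) * ∑ n, ∫ x, w n * E n x ∂ν := by rw [Finset.mul_sum]
    _ = Real.exp (-η * J) * ∫ x, ∑ n, w n * E n x ∂ν := by
        rw [integral_finset_sum _ (fun n _ => hwE_int n)]
    _ ≤ Real.exp (-η * J) * ∫ x, u x ∂ν := by
        refine mul_le_mul_of_nonneg_left ?_ (Real.exp_pos _).le
        exact integral_mono (integrable_finset_sum _ (fun n _ => hwE_int n)) hu_intg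
          (fun x => hsum_pt x)
    _ = Real.exp (-η * J) := by rw [hu_int, mul_one]


/-- Integral exponential concavity: if `lam` is `η`-exponentially concave on a
convex set `Γ`, then the integral loss `λ_{u,μ}` is `η`-exponentially concave,
with the pointwise weighted average as aggregation rule. -/
theorem integral_exp_concavity
    {V Ω X : Type*} [AddCommGroup V] [Module ℝ V]
    [MeasurableSpace V] [MeasurableSpace Ω] [MeasurableSpace X]
    (Γ : Set V) (hΓ : Convex ℝ Γ)
    (lam : V → Ω → ℝ)
    (hlam_meas : Measurable fun p : V × Ω => lam p.1 p.2)
    (η : ℝ) (hη : 0 < η)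
    (hconc : ∀ (N : ℕ) (w : Fin N → ℝ), (∀ n, 0 ≤ w n) → (∑ n, w n = 1) →
      ∀ (γ : Fin N → V), (∀ n, γ n ∈ Γ) → ∀ o : Ω,
        ∑ n, w n * Real.exp (-η * lam (γ n) o) ≤
          Real.exp (-η * lam (∑ n, w n • γ n) o))
    -- ω-dependent σ-finite measure and weight
    (μ : (X → Ω) → Measure X) (hμ : ∀ ω, SigmaFinite (μ ω))
    (u : (X → Ω) → X → ℝ)
    (hu_nonneg : ∀ ω x, 0 ≤ u ω x)
    (hu_meas : ∀ ω, Measurable (u ω))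
    (hu_int : ∀ ω, ∫ x, u ω x ∂(μ ω) = 1)
    -- the game data
    (N : ℕ) (w : Fin N → ℝ) (hw_nonneg : ∀ n, 0 ≤ w n) (hw_sum : ∑ n, w n = 1)
    (γ : Fin N → X → V) (hγ_meas : ∀ n, Measurable (γ n))
    (hγ_mem : ∀ n x, γ n x ∈ Γ)
    (ω : X → Ω) (hω_meas : Measurable ω)
    (hint : ∀ n, Integrable (fun x => lam (γ n x) (ω x) * u ω x) (μ ω))
    (hint_agg : Integrable
      (fun x => lam (∑ n, w n • γ n x) (ω x) * u ω x) (μ ω)) :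
    ∑ n, w n * Real.exp (-η * ∫ x, lam (γ n x) (ω x) * u ω x ∂(μ ω)) ≤
      Real.exp (-η * ∫ x, lam (∑ n, w n • γ n x) (ω x) * u ω x ∂(μ ω)) := by
  exact exp_concavity_integral_aux (μ ω) (u ω) (hu_nonneg ω) (hu_meas ω) (hu_int ω)
    N w hw_nonneg η
    (fun n x => lam (γ n x) (ω x))
    (fun n => hlam_meas.comp ((hγ_meas n).prodMk hω_meas))
    (fun x => lam (∑ n, w n • γ n x) (ω x))
    (fun x => hconc N w hw_nonneg hw_sum (fun n => γ n x) (fun n => hγ_mem n x) (ω x))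
    hint hint_agg
end

section
/- For one-dimensional Borel probability measures γ and ω on ℝ with finite first moments, the energy distance 2·E_{x∼γ, y∼ω}|x − y| − E_{x,x'∼γ}|x − x'| − E_{y,y'∼ω}|y − y'| equals 2·∫_{−∞}^{∞} (F_γ(t) − F_ω(t))² dt, where F_γ, F_ω are the cumulative distribution functions of γ and ω. -/
open MeasureTheory Real Set
open scoped ENNReal NNReal

namespace EnergyDistAux

noncomputable def f (μ ν : Measure ℝ) (t : ℝ) : ℝ :=
  (μ (Iic t)).toReal * (ν (Ioi t)).toReal + (μ (Ioi t)).toReal * (ν (Iic t)).toReal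

lemma meas_cdf (μ : Measure ℝ) : Measurable fun t => μ (Iic t) := by
  apply Monotone.measurable
  intro a b hab
  exact measure_mono (Iic_subset_Iic.mpr hab)

lemma meas_tail (μ : Measure ℝ) : Measurable fun t => μ (Ioi t) := by
  apply Antitone.measurable
  intro a b hab
  exact measure_mono (Ioi_subset_Ioi hab)

lemma lint_key (μ ν : Measure ℝ) [IsProbabilityMeasure μ] [IsProbabilityMeasure ν] :
    ∫⁻ p : ℝ × ℝ, ENNReal.ofReal |p.1 - p.2| ∂(μ.prod ν)
      = ∫⁻ t : ℝ, (μ (Iic t) * ν (Ioi t) + μ (Ioi t) * ν (Iic t)) := by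
  set S : Set ((ℝ × ℝ) × ℝ) := {q | q.1.1 ⊓ q.1.2 ≤ q.2 ∧ q.2 < q.1.1 ⊔ q.1.2} with hSdef
  have hS : MeasurableSet S := by
    apply MeasurableSet.inter
    · exact measurableSet_le (by fun_prop) measurable_snd
    · exact measurableSet_lt measurable_snd (by fun_prop)
  have step1 : ∀ p : ℝ × ℝ,
      ENNReal.ofReal |p.1 - p.2| = ∫⁻ t : ℝ, S.indicator 1 (p, t) := by
    intro p
    have h1 : ∀ t : ℝ, S.indicator (1 : (ℝ × ℝ) × ℝ → ℝ≥0∞) (p, t)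
        = (Ico (p.1 ⊓ p.2) (p.1 ⊔ p.2)).indicator (1 : ℝ → ℝ≥0∞) t := by
      intro t
      simp [Set.indicator_apply, hSdef, Set.mem_Ico]
    rw [show (fun t => S.indicator 1 (p, t)) = (Ico (p.1 ⊓ p.2) (p.1 ⊔ p.2)).indicator 1
      from funext h1]
    rw [lintegral_indicator measurableSet_Ico]
    simp [Real.volume_Ico, max_sub_min_eq_abs, abs_sub_comm]
  have step3 : ∀ t : ℝ,
      ∫⁻ p : ℝ × ℝ, S.indicator 1 (p, t) ∂(μ.prod ν)
        = μ (Iic t) * ν (Ioi t) + μ (Ioi t) * ν (Iic t) := by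
    intro t
    have hset : {p : ℝ × ℝ | (p, t) ∈ S} = (Iic t ×ˢ Ioi t) ∪ (Ioi t ×ˢ Iic t) := by
      ext p
      simp only [hSdef, Set.mem_setOf_eq, Set.mem_union, Set.mem_prod, Set.mem_Iic,
        Set.mem_Ioi]
      constructor
      · rintro ⟨h1, h2⟩
        rcases le_or_gt p.1 t with hx | hx
        · rcases le_or_gt p.2 t with hy | hy
          · exact absurd h2 (not_lt.mpr (sup_le hx hy))
          · exact Or.inl ⟨hx, hy⟩
        · rcases le_or_gt p.2 t with hy | hy
          · exact Or.inr ⟨hx, hy⟩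
          · exact absurd h1 (not_le.mpr (lt_inf_iff.mpr ⟨hx, hy⟩))
      · rintro (⟨h1, h2⟩ | ⟨h1, h2⟩)
        · exact ⟨inf_le_left.trans h1, h2.trans_le le_sup_right⟩
        · exact ⟨inf_le_right.trans h2, h1.trans_le le_sup_left⟩
    have h1 : ∀ p : ℝ × ℝ, S.indicator (1 : (ℝ × ℝ) × ℝ → ℝ≥0∞) (p, t)
        = ({p : ℝ × ℝ | (p, t) ∈ S}).indicator (1 : ℝ × ℝ → ℝ≥0∞) p := by
      intro p; simp [Set.indicator_apply]
    rw [show (fun p : ℝ × ℝ => S.indicator 1 (p, t))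
        = ({p : ℝ × ℝ | (p, t) ∈ S}).indicator 1 from funext h1]
    rw [lintegral_indicator (by
      rw [hset]
      exact (measurableSet_Iic.prod measurableSet_Ioi).union
        (measurableSet_Ioi.prod measurableSet_Iic))]
    simp only [Pi.one_apply]
    rw [setLIntegral_one, hset, measure_union, Measure.prod_prod, Measure.prod_prod]
    · exact Set.disjoint_left.mpr (fun p hp hq => absurd hp.1 (not_le.mpr (show t < p.1 from hq.1)))
    · exact measurableSet_Ioi.prod measurableSet_Iic
  calc ∫⁻ p : ℝ × ℝ, ENNReal.ofReal |p.1 - p.2| ∂(μ.prod ν)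
      = ∫⁻ p : ℝ × ℝ, (∫⁻ t : ℝ, S.indicator 1 (p, t)) ∂(μ.prod ν) :=
        lintegral_congr step1
    _ = ∫⁻ t : ℝ, (∫⁻ p : ℝ × ℝ, S.indicator 1 (p, t) ∂(μ.prod ν)) :=
        lintegral_lintegral_swap ((measurable_one.indicator hS).aemeasurable)
    _ = ∫⁻ t : ℝ, (μ (Iic t) * ν (Ioi t) + μ (Ioi t) * ν (Iic t)) :=
        lintegral_congr step3

lemma integrable_abssub (μ ν : Measure ℝ) [IsProbabilityMeasure μ] [IsProbabilityMeasure ν]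
    (hμ : Integrable (fun x => |x|) μ) (hν : Integrable (fun x => |x|) ν) :
    Integrable (fun p : ℝ × ℝ => |p.1 - p.2|) (μ.prod ν) := by
  have hfst : MeasurePreserving Prod.fst (μ.prod ν) μ :=
    ⟨measurable_fst, by simp⟩
  have hsnd : MeasurePreserving Prod.snd (μ.prod ν) ν :=
    ⟨measurable_snd, by simp⟩
  have h1 : Integrable (fun p : ℝ × ℝ => |p.1|) (μ.prod ν) :=
    (hfst.integrable_comp hμ.aestronglyMeasurable).mpr hμ
  have h2 : Integrable (fun p : ℝ × ℝ => |p.2|) (μ.prod ν) :=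
    (hsnd.integrable_comp hν.aestronglyMeasurable).mpr hν
  apply (h1.add h2).mono'
  · exact (continuous_abs.comp (continuous_fst.sub continuous_snd)).aestronglyMeasurable
  · filter_upwards with p
    simp only [Real.norm_eq_abs, abs_abs]
    exact (abs_sub _ _).trans (le_refl _)

lemma f_nonneg (μ ν : Measure ℝ) (t : ℝ) : 0 ≤ f μ ν t := by
  unfold f; positivity

lemma ofReal_f (μ ν : Measure ℝ) [IsProbabilityMeasure μ] [IsProbabilityMeasure ν] (t : ℝ) :
    ENNReal.ofReal (f μ ν t) = μ (Iic t) * ν (Ioi t) + μ (Ioi t) * ν (Iic t) := by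
  unfold f
  rw [ENNReal.ofReal_add (by positivity) (by positivity),
    ENNReal.ofReal_mul ENNReal.toReal_nonneg, ENNReal.ofReal_mul ENNReal.toReal_nonneg,
    ENNReal.ofReal_toReal (measure_ne_top _ _), ENNReal.ofReal_toReal (measure_ne_top _ _),
    ENNReal.ofReal_toReal (measure_ne_top _ _), ENNReal.ofReal_toReal (measure_ne_top _ _)]

lemma meas_f (μ ν : Measure ℝ) : Measurable (f μ ν) := by
  unfold f
  exact (((meas_cdf μ).ennreal_toReal.mul (meas_tail ν).ennreal_toReal).add
    ((meas_tail μ).ennreal_toReal.mul (meas_cdf ν).ennreal_toReal))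

lemma integrable_f (μ ν : Measure ℝ) [IsProbabilityMeasure μ] [IsProbabilityMeasure ν]
    (hμ : Integrable (fun x => |x|) μ) (hν : Integrable (fun x => |x|) ν) :
    Integrable (f μ ν) volume := by
  refine ⟨(meas_f μ ν).aestronglyMeasurable, ?_⟩
  rw [hasFiniteIntegral_iff_ofReal (Filter.Eventually.of_forall (f_nonneg μ ν))]
  have : ∫⁻ t : ℝ, ENNReal.ofReal (f μ ν t) = ∫⁻ p : ℝ × ℝ,
      ENNReal.ofReal |p.1 - p.2| ∂(μ.prod ν) := by
    rw [lint_key]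
    exact lintegral_congr (ofReal_f μ ν)
  rw [this]
  exact (hasFiniteIntegral_iff_ofReal
    (Filter.Eventually.of_forall fun p => abs_nonneg _)).mp
    (integrable_abssub μ ν hμ hν).hasFiniteIntegral

lemma int_eq (μ ν : Measure ℝ) [IsProbabilityMeasure μ] [IsProbabilityMeasure ν]
    (hμ : Integrable (fun x => |x|) μ) (hν : Integrable (fun x => |x|) ν) :
    ∫ p : ℝ × ℝ, |p.1 - p.2| ∂(μ.prod ν) = ∫ t : ℝ, f μ ν t := by
  rw [integral_eq_lintegral_of_nonneg_ae (f := fun p : ℝ × ℝ => |p.1 - p.2|)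
    (Filter.Eventually.of_forall fun p => abs_nonneg _)
    (continuous_abs.comp (continuous_fst.sub continuous_snd)).aestronglyMeasurable,
    integral_eq_lintegral_of_nonneg_ae (Filter.Eventually.of_forall (f_nonneg μ ν))
    (meas_f μ ν).aestronglyMeasurable]
  congr 1
  rw [lint_key]
  exact (lintegral_congr (ofReal_f μ ν)).symm

lemma tail_eq (μ : Measure ℝ) [IsProbabilityMeasure μ] (t : ℝ) :
    (μ (Ioi t)).toReal = 1 - (μ (Iic t)).toReal := by
  have h : μ (Ioi t) = 1 - μ (Iic t) := by
    rw [← measure_univ (μ := μ), ← Set.compl_Iic]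
    exact measure_compl measurableSet_Iic (measure_ne_top _ _)
  rw [h, ENNReal.toReal_sub_of_le prob_le_one ENNReal.one_ne_top, ENNReal.toReal_one]

end EnergyDistAux

open EnergyDistAux

/-- For one-dimensional Borel probability measures with finite first moments,
the energy distance equals twice the integral of the squared difference of the
cumulative distribution functions (i.e. twice the CRPS). -/
theorem energy_distance_eq_two_crps
    (γ ω : Measure ℝ) [IsProbabilityMeasure γ] [IsProbabilityMeasure ω]
    (hγ : Integrable (fun x => |x|) γ) (hω : Integrable (fun x => |x|) ω) :
    2 * (∫ p : ℝ × ℝ, |p.1 - p.2| ∂(γ.prod ω)) -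
      (∫ p : ℝ × ℝ, |p.1 - p.2| ∂(γ.prod γ)) -
      (∫ p : ℝ × ℝ, |p.1 - p.2| ∂(ω.prod ω)) =
    2 * ∫ t : ℝ,
        ((γ (Set.Iic t)).toReal - (ω (Set.Iic t)).toReal) ^ 2 := by
  rw [int_eq γ ω hγ hω, int_eq γ γ hγ hγ, int_eq ω ω hω hω]
  have hpt : ∀ t : ℝ, ((γ (Set.Iic t)).toReal - (ω (Set.Iic t)).toReal) ^ 2
      = f γ ω t - 2⁻¹ * f γ γ t - 2⁻¹ * f ω ω t := by
    intro t
    unfold f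
    rw [tail_eq γ t, tail_eq ω t]
    ring
  rw [show (fun t : ℝ => ((γ (Set.Iic t)).toReal - (ω (Set.Iic t)).toReal) ^ 2)
      = fun t => f γ ω t - 2⁻¹ * f γ γ t - 2⁻¹ * f ω ω t from funext hpt]
  have hA : Integrable (f γ ω) volume := integrable_f γ ω hγ hω
  have hB : Integrable (fun t => 2⁻¹ * f γ γ t) volume :=
    (integrable_f γ γ hγ hγ).const_mul 2⁻¹
  have hC : Integrable (fun t => 2⁻¹ * f ω ω t) volume :=
    (integrable_f ω ω hω hω).const_mul 2⁻¹
  have h12 : Integrable (fun t => f γ ω t - 2⁻¹ * f γ γ t) volume := hA.sub hB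
  rw [integral_sub h12 hC, integral_sub hA hB, integral_const_mul, integral_const_mul]
  ring
end

section
/- Let (X, σ, μ) be a measure space with σ-finite μ, p_ω a probability density with respect to μ which is strictly positive, and η = 1. For any probability densities p₁,...,p_N (w.r.t. μ) and weights w ∈ Δ_N, setting p̄ = ∑_n w_n p_n, one has exp(−KL(ω ‖ p̄)) ≥ ∑_n w_n exp(−KL(ω ‖ p_n)), i.e., KL divergence (as a loss in its second argument) is 1-exponentially concave, with the mixture as aggregated forecast. -/
open MeasureTheory Real Finset

/-- KL divergence (as a loss in its second argument) is `1`-exponentially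
concave: aggregating densities by their mixture satisfies the
exp-concavity inequality. -/
theorem kl_one_exp_concave
    {X : Type*} [MeasurableSpace X] (μ : Measure X) [SigmaFinite μ]
    (pω : X → ℝ) (hpω_meas : Measurable pω)
    (hpω_pos : ∀ x, 0 < pω x) (hpω_int : ∫ x, pω x ∂μ = 1)
    (N : ℕ) (w : Fin N → ℝ) (hw_nonneg : ∀ n, 0 ≤ w n) (hw_sum : ∑ n, w n = 1)
    (p : Fin N → X → ℝ) (hp_meas : ∀ n, Measurable (p n))
    (hp_pos : ∀ n x, 0 < p n x) (hp_int : ∀ n, ∫ x, p n x ∂μ = 1)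
    (hKL_int : ∀ n, Integrable (fun x => pω x * Real.log (pω x / p n x)) μ)
    (hKLbar_int : Integrable
      (fun x => pω x * Real.log (pω x / ∑ n, w n * p n x)) μ) :
    ∑ n, w n * Real.exp (-(∫ x, pω x * Real.log (pω x / p n x) ∂μ)) ≤
      Real.exp (-(∫ x, pω x * Real.log (pω x / ∑ n, w n * p n x) ∂μ)) := by
  classical
  set pbar : X → ℝ := fun x => ∑ n, w n * p n x with hpbar_def
  have hpbar_meas : Measurable pbar :=
    Finset.measurable_sum _ fun n _ => (hp_meas n).const_mul (w n)
  obtain ⟨m, hm⟩ : ∃ m, 0 < w m := by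
    by_contra h
    push_neg at h
    have : ∑ n, w n ≤ 0 := Finset.sum_nonpos fun n _ => h n
    rw [hw_sum] at this; linarith
  have hpbar_pos : ∀ x, 0 < pbar x := fun x =>
    Finset.sum_pos' (fun n _ => mul_nonneg (hw_nonneg n) (hp_pos n x).le)
      ⟨m, Finset.mem_univ m, mul_pos hm (hp_pos m x)⟩
  have hpω_integrable : Integrable pω μ := by
    by_contra h
    rw [integral_undef h] at hpω_int; norm_num at hpω_int
  -- the probability measure with density pω
  set f : X → NNReal := fun x => (pω x).toNNReal with hf_def
  have hf_meas : Measurable f := hpω_meas.real_toNNReal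
  set ν : Measure X := μ.withDensity (fun x => (f x : ENNReal)) with hν_def
  have hsmul_eq : ∀ g : X → ℝ, (fun x => f x • g x) = fun x => pω x * g x := by
    intro g; funext x
    simp [hf_def, NNReal.smul_def, Real.coe_toNNReal _ (hpω_pos x).le]
  have hint_eq : ∀ g : X → ℝ, ∫ x, g x ∂ν = ∫ x, pω x * g x ∂μ := by
    intro g
    rw [hν_def, integral_withDensity_eq_integral_smul hf_meas, hsmul_eq]
  have hint_iff : ∀ g : X → ℝ,
      Integrable g ν ↔ Integrable (fun x => pω x * g x) μ := by
    intro g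
    rw [hν_def, integrable_withDensity_iff_integrable_smul hf_meas, hsmul_eq]
  have hν_prob : IsProbabilityMeasure ν := by
    constructor
    rw [hν_def, withDensity_apply _ MeasurableSet.univ, setLIntegral_univ]
    have h1 : ∫⁻ x, (f x : ENNReal) ∂μ = ENNReal.ofReal (∫ x, pω x ∂μ) := by
      rw [ofReal_integral_eq_lintegral_ofReal hpω_integrable
        (ae_of_all _ fun x => (hpω_pos x).le)]
      rfl
    rw [h1, hpω_int]; simp
  -- rewrite exponents: log (pω/pₙ) decomposition
  have hlog : ∀ n x, pω x * Real.log (p n x / pbar x)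
      = pω x * Real.log (pω x / pbar x) - pω x * Real.log (pω x / p n x) := by
    intro n x
    rw [← mul_sub]
    congr 1
    rw [Real.log_div (hp_pos n x).ne' (hpbar_pos x).ne',
      Real.log_div (hpω_pos x).ne' (hpbar_pos x).ne',
      Real.log_div (hpω_pos x).ne' (hp_pos n x).ne']
    ring
  have hK_int : ∀ n, Integrable (fun x => pω x * Real.log (p n x / pbar x)) μ := by
    intro n
    have := hKLbar_int.sub (hKL_int n)
    rw [show (fun x => pω x * Real.log (p n x / pbar x)) = ((fun x => pω x * Real.log (pω x / ∑ n, w n * p n x)) - fun x => pω x * Real.log (pω x / p n x)) from funext fun x => hlog n x]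
    exact this
  have hK_val : ∀ n, ∫ x, pω x * Real.log (p n x / pbar x) ∂μ
      = (∫ x, pω x * Real.log (pω x / pbar x) ∂μ)
        - ∫ x, pω x * Real.log (pω x / p n x) ∂μ := by
    intro n
    rw [← integral_sub hKLbar_int (hKL_int n)]
    congr 1; funext x; exact hlog n x
  -- Jensen for each n with positive weight
  have hratio_le : ∀ n x, 0 < w n → p n x / pbar x ≤ (w n)⁻¹ := by
    intro n x hwn
    rw [div_le_iff₀ (hpbar_pos x), inv_mul_eq_div, le_div_iff₀ hwn, mul_comm]
    exact Finset.single_le_sum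
      (fun i _ => mul_nonneg (hw_nonneg i) (hp_pos i x).le) (Finset.mem_univ n)
  have hgi : ∀ n, 0 < w n →
      Integrable (fun x => pω x * (p n x / pbar x)) μ := by
    intro n hwn
    apply Integrable.mono' (hpω_integrable.const_mul (w n)⁻¹)
    · exact (hpω_meas.mul ((hp_meas n).div hpbar_meas)).aestronglyMeasurable
    · refine ae_of_all _ fun x => ?_
      have h1 : 0 ≤ pω x * (p n x / pbar x) :=
        mul_nonneg (hpω_pos x).le (div_nonneg (hp_pos n x).le (hpbar_pos x).le)
      rw [Real.norm_of_nonneg h1, mul_comm ((w n)⁻¹)]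
      exact mul_le_mul_of_nonneg_left (hratio_le n x hwn) (hpω_pos x).le
  have jensen : ∀ n, 0 < w n →
      Real.exp (∫ x, pω x * Real.log (p n x / pbar x) ∂μ)
        ≤ ∫ x, pω x * (p n x / pbar x) ∂μ := by
    intro n hwn
    have hfi : Integrable (fun x => Real.log (p n x / pbar x)) ν :=
      (hint_iff _).mpr (hK_int n)
    have hgi' : Integrable
        (Real.exp ∘ fun x => Real.log (p n x / pbar x)) ν := by
      have : (Real.exp ∘ fun x => Real.log (p n x / pbar x))
          = fun x => p n x / pbar x := by
        funext x
        exact Real.exp_log (div_pos (hp_pos n x) (hpbar_pos x))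
      rw [this, hint_iff]
      exact hgi n hwn
    have hJ := convexOn_exp.map_integral_le (μ := ν)
      continuous_exp.continuousOn isClosed_univ
      (ae_of_all _ fun x => Set.mem_univ _) hfi hgi'
    rw [hint_eq] at hJ
    calc Real.exp (∫ x, pω x * Real.log (p n x / pbar x) ∂μ)
        ≤ ∫ x, Real.exp (Real.log (p n x / pbar x)) ∂ν := hJ
      _ = ∫ x, pω x * (p n x / pbar x) ∂μ := by
          rw [show (fun x => Real.exp (Real.log (p n x / pbar x)))
              = fun x => p n x / pbar x from funext fun x =>
                Real.exp_log (div_pos (hp_pos n x) (hpbar_pos x)), hint_eq]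
  -- sum up
  have hsum_le : ∑ n, w n * Real.exp (∫ x, pω x * Real.log (p n x / pbar x) ∂μ)
      ≤ 1 := by
    have step : ∑ n, w n * Real.exp (∫ x, pω x * Real.log (p n x / pbar x) ∂μ)
        ≤ ∑ n, ∫ x, w n * (pω x * (p n x / pbar x)) ∂μ := by
      apply Finset.sum_le_sum
      intro n _
      rcases eq_or_lt_of_le (hw_nonneg n) with h0 | hwn
      · simp [← h0]
      · rw [integral_const_mul]
        exact mul_le_mul_of_nonneg_left (jensen n hwn) (hw_nonneg n)
    have hsum_int : ∀ n : Fin N,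
        Integrable (fun x => w n * (pω x * (p n x / pbar x))) μ := by
      intro n
      rcases eq_or_lt_of_le (hw_nonneg n) with h0 | hwn
      · simp [← h0]
      · exact (hgi n hwn).const_mul _
    have heq : ∑ n, ∫ x, w n * (pω x * (p n x / pbar x)) ∂μ = 1 := by
      rw [← integral_finset_sum _ fun n _ => hsum_int n]
      rw [show (fun x => ∑ n, w n * (pω x * (p n x / pbar x))) = pω from ?_]
      · exact hpω_int
      · funext x
        have : ∑ n, w n * (pω x * (p n x / pbar x))
            = (pω x / pbar x) * ∑ n, w n * p n x := by
          rw [Finset.mul_sum]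
          apply Finset.sum_congr rfl
          intro n _
          field_simp
        rw [this]
        exact div_mul_cancel₀ _ (hpbar_pos x).ne'
    calc _ ≤ ∑ n, ∫ x, w n * (pω x * (p n x / pbar x)) ∂μ := step
      _ = 1 := heq
  -- conclude
  have key : ∀ n, Real.exp (-(∫ x, pω x * Real.log (pω x / p n x) ∂μ))
      = Real.exp (∫ x, pω x * Real.log (p n x / pbar x) ∂μ)
        * Real.exp (-(∫ x, pω x * Real.log (pω x / pbar x) ∂μ)) := by
    intro n
    rw [← Real.exp_add]
    congr 1
    rw [hK_val n]
    ring
  calc ∑ n, w n * Real.exp (-(∫ x, pω x * Real.log (pω x / p n x) ∂μ))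
      = (∑ n, w n * Real.exp (∫ x, pω x * Real.log (p n x / pbar x) ∂μ))
        * Real.exp (-(∫ x, pω x * Real.log (pω x / pbar x) ∂μ)) := by
        rw [Finset.sum_mul]
        apply Finset.sum_congr rfl
        intro n _
        rw [key n, mul_assoc]
    _ ≤ 1 * Real.exp (-(∫ x, pω x * Real.log (pω x / pbar x) ∂μ)) := by
        apply mul_le_mul_of_nonneg_right hsum_le (Real.exp_pos _).le
    _ = Real.exp (-(∫ x, pω x * Real.log (pω x / pbar x) ∂μ)) := one_mul _
end

section
/- The complex squared loss λ(z, z') = |z − z'|² on the closed unit disk {z ∈ ℂ : |z| ≤ 1} is 1/8-exponentially concave in the first argument: for each fixed z' with |z'| ≤ 1, the function z ↦ exp(−|z − z'|²/8) is concave on the unit disk (viewed as a subset of ℝ²). -/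
open Real

/-- 1-D auxiliary lemma: `exp` of a negative quadratic divided by 8 is concave on `[0,1]`
provided `(2At+B)^2 ≤ 16 A` there. -/
lemma exp_neg_quadratic_concave (A B C : ℝ)
    (h : ∀ t ∈ Set.Icc (0:ℝ) 1, (2*A*t+B)^2 ≤ 16*A) :
    ConcaveOn ℝ (Set.Icc (0:ℝ) 1)
      (fun t => Real.exp (-((A*t^2+B*t+C)/8))) := by
  apply concaveOn_of_hasDerivWithinAt2_nonpos (convex_Icc 0 1)
    (f' := fun t => Real.exp (-((A*t^2+B*t+C)/8)) * (-((2*A*t+B)/8)))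
    (f'' := fun t => Real.exp (-((A*t^2+B*t+C)/8)) * ((2*A*t+B)^2/64 - A/4))
  · fun_prop
  · intro t _
    have hg : HasDerivAt (fun t : ℝ => -((A*t^2+B*t+C)/8)) (-((2*A*t+B)/8)) t := by
      have : HasDerivAt (fun t : ℝ => A*t^2+B*t+C) (2*A*t+B) t := by
        have h1 : HasDerivAt (fun t : ℝ => A*t^2+B*t+C) (A*(2*t)+B) t := by
          exact (((hasDerivAt_pow 2 t).const_mul A).add
            ((hasDerivAt_id t).const_mul B)).add_const C |>.congr_deriv (by ring_nf)
        convert h1 using 1; ring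
      exact (this.div_const 8).neg
    exact (hg.exp.congr_deriv (by ring)).hasDerivWithinAt
  · intro t _
    have hg : HasDerivAt (fun t : ℝ => -((A*t^2+B*t+C)/8)) (-((2*A*t+B)/8)) t := by
      have : HasDerivAt (fun t : ℝ => A*t^2+B*t+C) (2*A*t+B) t := by
        have h1 : HasDerivAt (fun t : ℝ => A*t^2+B*t+C) (A*(2*t)+B) t := by
          exact (((hasDerivAt_pow 2 t).const_mul A).add
            ((hasDerivAt_id t).const_mul B)).add_const C |>.congr_deriv (by ring_nf)
        convert h1 using 1; ring
      exact (this.div_const 8).neg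
    have hl : HasDerivAt (fun t : ℝ => -((2*A*t+B)/8)) (-(2*A/8)) t := by
      have : HasDerivAt (fun t : ℝ => 2*A*t+B) (2*A) t := by
        simpa using ((hasDerivAt_id t).const_mul (2*A)).add_const B
      exact (this.div_const 8).neg
    have := hg.exp.mul hl
    exact (this.congr_deriv (by ring)).hasDerivWithinAt
  · intro t ht
    have ht' : t ∈ Set.Icc (0:ℝ) 1 := interior_subset ht
    have := h t ht'
    have hx : (2*A*t+B)^2/64 - A/4 ≤ 0 := by nlinarith
    exact mul_nonpos_of_nonneg_of_nonpos (Real.exp_pos _).le hx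

/-- The complex squared loss `|z - z'|²` on the closed unit disk is
`1/8`-exponentially concave in its first argument. -/
theorem complex_squared_loss_exp_concave
    (z' : ℂ) (hz' : ‖z'‖ ≤ 1) :
    ConcaveOn ℝ (Metric.closedBall (0 : ℂ) 1)
      (fun z => Real.exp (-(‖z - z'‖ ^ 2 / 8))) := by
  refine ⟨convex_closedBall 0 1, ?_⟩
  intro x hx y hy a b ha hb hab
  set v : ℂ := y - x with hv
  set w : ℂ := x - z' with hw
  set A : ℝ := ‖v‖^2 with hA
  set B : ℝ := 2 * (inner ℝ w v : ℝ) with hB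
  set C : ℝ := ‖w‖^2 with hC
  -- key identity
  have key : ∀ t : ℝ, ‖(x + t • v) - z'‖^2 = A*t^2 + B*t + C := by
    intro t
    have : (x + t • v) - z' = w + t • v := by rw [hw]; ring
    rw [this, @norm_add_sq_real ℂ, real_inner_smul_right, norm_smul]
    simp [hA, hB, hC, mul_pow]
    ring
  -- segment points stay in the ball
  have hseg : ∀ t ∈ Set.Icc (0:ℝ) 1, ‖x + t • v‖ ≤ 1 := by
    intro t ht
    have : x + t • v = (1-t) • x + t • y := by
      rw [hv]; module
    rw [this]
    have := (convex_closedBall (0:ℂ) 1) hx hy (by linarith [ht.2] : (0:ℝ) ≤ 1 - t) ht.1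
      (by ring)
    simpa using this
  have hcond : ∀ t ∈ Set.Icc (0:ℝ) 1, (2*A*t+B)^2 ≤ 16*A := by
    intro t ht
    have h1 : 2*A*t+B = 2 * (inner ℝ (w + t • v) v : ℝ) := by
      rw [inner_add_left, real_inner_smul_left, hA, hB, real_inner_self_eq_norm_sq]
      ring
    have h2 : ‖w + t • v‖ ≤ 2 := by
      have : w + t • v = (x + t • v) - z' := by rw [hw]; ring
      rw [this]
      calc ‖(x + t • v) - z'‖ ≤ ‖x + t • v‖ + ‖z'‖ := norm_sub_le _ _
        _ ≤ 1 + 1 := add_le_add (hseg t ht) hz'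
        _ = 2 := by norm_num
    have h3 : |(inner ℝ (w + t • v) v : ℝ)| ≤ ‖w + t • v‖ * ‖v‖ :=
      abs_real_inner_le_norm _ _
    have h4 : |(inner ℝ (w + t • v) v : ℝ)| ≤ 2 * ‖v‖ :=
      h3.trans (by nlinarith [norm_nonneg v])
    have h5 := abs_nonneg ((inner ℝ (w + t • v) v : ℝ))
    rw [h1]
    have := sq_abs ((inner ℝ (w + t • v) v : ℝ))
    nlinarith [norm_nonneg v]
  have hconc := exp_neg_quadratic_concave A B C hcond
  have h0 : (0:ℝ) ∈ Set.Icc (0:ℝ) 1 := by norm_num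
  have h1 : (1:ℝ) ∈ Set.Icc (0:ℝ) 1 := by norm_num
  have := hconc.2 h0 h1 ha hb hab
  simp only [smul_eq_mul, mul_zero, mul_one, zero_add] at this
  -- rewrite the three values
  have e0 : A*(0:ℝ)^2 + 0 + C = ‖x - z'‖^2 := by
    have := key 0; simp at this; linarith [this]
  have e1 : A*(1:ℝ)^2 + B + C = ‖y - z'‖^2 := by
    have := key 1
    have hxy : x + (1:ℝ) • v = y := by rw [hv]; simp
    rw [hxy] at this; simp at this ⊢; linarith
  have eb : A*b^2 + B*b + C = ‖(a • x + b • y) - z'‖^2 := by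
    have := key b
    have hxy : x + b • v = a • x + b • y := by
      rw [hv]
      have : a = 1 - b := by linarith
      rw [this]; module
    rw [hxy] at this; linarith
  rw [e0, e1, eb] at this
  simpa [smul_eq_mul, neg_div] using this
end
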